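/- Let V : X → ℝ be a value function on a finite state space X satisfying the Bellman equation V(x) = min over controlled distributions u(·|x) ≪ p(·|x) of [q(x) + KL(u(·|x)‖p(·|x)) + ∑_{x'} u(x'|x)V(x')], where p(·|x) is a strictly positive transition probability and q(x) ∈ ℝ. Then the desirability function Z(x) = exp(−V(x)) satisfies the linear equation exp(q(x))·Z(x) = ∑_{x'} p(x'|x)·Z(x'). -/

import Mathlib

open Finset

lemma gibbs_aux {X : Type*} [Fintype X] (u w : X → ℝ)
    (hu : ∀ x, 0 ≤ u x) (hw : ∀ x, 0 < w x)
    (hus : ∑ x, u x = 1) (hws : ∑ x, w x = 1) :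
    0 ≤ ∑ x, u x * Real.log (u x / w x) := by
  have key : ∀ x, u x - w x ≤ u x * Real.log (u x / w x) := by
    intro x
    rcases eq_or_lt_of_le (hu x) with h | h
    · rw [← h]; simp; linarith [(hw x).le]
    · have hlog : Real.log (w x / u x) ≤ w x / u x - 1 :=
        Real.log_le_sub_one_of_pos (div_pos (hw x) h)
    -- -log(u/w) = log(w/u)
      have hneg : -Real.log (u x / w x) = Real.log (w x / u x) := by
        rw [← Real.log_inv, inv_div]
      have h2 : u x * (w x / u x - 1) = w x - u x := by field_simp
      have h3 : u x * Real.log (w x / u x) ≤ u x * (w x / u x - 1) :=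
        mul_le_mul_of_nonneg_left hlog h.le
      rw [h2] at h3
      rw [← hneg] at h3
      linarith
  calc (0:ℝ) = ∑ x, (u x - w x) := by rw [Finset.sum_sub_distrib, hus, hws]; ring
    _ ≤ _ := Finset.sum_le_sum fun x _ => key x

/-- exponential transformation linearizes the discrete-time Bellman
equation. If `V` satisfies the Bellman equation (i.e. `V x` is the minimum over
controlled distributions `u(·|x) ≪ p(·|x)` of
`q x + KL(u(·|x)‖p(·|x)) + ∑ x', u x' * V x'`), then `Z = exp (-V)` satisfies
`exp (q x) * Z x = ∑ x', p x x' * Z x'`. -/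
theorem bellman_exponential_linearization {X : Type*} [Fintype X] [Nonempty X]
    (p : X → X → ℝ) (hp : ∀ x x', 0 < p x x') (hpsum : ∀ x, ∑ x', p x x' = 1)
    (q : X → ℝ) (V : X → ℝ)
    (hBellman : ∀ x, IsLeast
      {c : ℝ | ∃ u : X → ℝ, (∀ x', 0 ≤ u x') ∧ (∑ x', u x' = 1) ∧
        (∀ x', p x x' = 0 → u x' = 0) ∧
        c = q x + (∑ x', u x' * Real.log (u x' / p x x')) + ∑ x', u x' * V x'}
      (V x)) :
    ∀ x, Real.exp (q x) * Real.exp (-V x) = ∑ x', p x x' * Real.exp (-V x') := by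
  intro x
  set G := ∑ x', p x x' * Real.exp (-V x') with hG
  have hGpos : 0 < G :=
    Finset.sum_pos (fun x' _ => mul_pos (hp x x') (Real.exp_pos _)) Finset.univ_nonempty
  set w : X → ℝ := fun x' => p x x' * Real.exp (-V x') / G with hw
  have hwpos : ∀ x', 0 < w x' := fun x' => by
    have := hp x x'; simp only [hw]; positivity
  have hwsum : ∑ x', w x' = 1 := by
    simp only [hw]
    rw [← Finset.sum_div, ← hG]
    field_simp
  obtain ⟨hmem, hlb⟩ := hBellman x
  obtain ⟨u, hu0, hus, _, hVx⟩ := hmem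
  -- log value of w
  have hlogw : ∀ x', Real.log (w x' / p x x') = -V x' - Real.log G := by
    intro x'
    have hpx := (hp x x').ne'
    have : w x' / p x x' = Real.exp (-V x') / G := by
      simp only [hw]; field_simp
    rw [this, Real.log_div (Real.exp_ne_zero _) hGpos.ne', Real.log_exp]
  -- upper bound: V x ≤ q x - log G
  have hub : V x ≤ q x - Real.log G := by
    apply hlb
    refine ⟨w, fun x' => (hwpos x').le, hwsum,
      fun x' h => absurd h (hp x x').ne', ?_⟩
    have hsum1 : ∑ x', w x' * Real.log (w x' / p x x')
        = ∑ x', (-(w x' * V x') - w x' * Real.log G) := by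
      refine Finset.sum_congr rfl fun x' _ => ?_
      rw [hlogw x']; ring
    rw [hsum1, Finset.sum_sub_distrib, Finset.sum_neg_distrib,
      ← Finset.sum_mul, hwsum]
    ring
  -- lower bound, via Gibbs inequality
  have hgibbs := gibbs_aux u w hu0 hwpos hus hwsum
  have hident : ∑ x', u x' * Real.log (u x' / w x')
      = (∑ x', u x' * Real.log (u x' / p x x')) + (∑ x', u x' * V x')
        + Real.log G := by
    have hpt : ∀ x', u x' * Real.log (u x' / w x')
        = u x' * Real.log (u x' / p x x') + u x' * V x' + u x' * Real.log G := by
      intro x'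
      rcases eq_or_lt_of_le (hu0 x') with h | h
      · rw [← h]; ring
      · have h1 : Real.log (u x' / w x') = Real.log (u x') - Real.log (w x') :=
          Real.log_div h.ne' (hwpos x').ne'
        have h2 : Real.log (u x' / p x x') = Real.log (u x') - Real.log (p x x') :=
          Real.log_div h.ne' (hp x x').ne'
        have h3 : Real.log (w x') = Real.log (p x x') - V x' - Real.log G := by
          have := hlogw x'
          rw [Real.log_div (hwpos x').ne' (hp x x').ne'] at this
          linarith
        rw [h1, h2, h3]; ring
    rw [Finset.sum_congr rfl fun x' _ => hpt x']
    rw [Finset.sum_add_distrib, Finset.sum_add_distrib, ← Finset.sum_mul, hus]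
    ring
  have hlow : q x - Real.log G ≤ V x := by
    rw [hVx]; rw [hident] at hgibbs; linarith
  have hVeq : -V x = Real.log G - q x := by linarith
  rw [hVeq, Real.exp_sub, Real.exp_log hGpos]
  field_simp
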